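/- Let q = 2^n and ε ∈ F_q with Tr_{F_q/F_2}(ε) = 1, and let ξ ∈ F_{q²} be a root of X² + X + ε. If y, z in an extension field satisfy y^q + y = u, z^q + z = v with u² + εv² + uv + 1 = 0, then setting s = y + ξz and t = y + (ξ+1)z one has (s^q + t)(t^q + s) = 1. -/

import Mathlib

theorem stmt4 (n q : ℕ) (hn : 0 < n) (hq : q = 2 ^ n)
    (K : Type) [Field K] [CharP K 2]
    (ε ξ u v y z s t : K)
    (hε : ε ^ q = ε) (htr : ∑ i ∈ Finset.range n, ε ^ (2 ^ i) = 1)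
    (hξ : ξ ^ 2 + ξ + ε = 0) (hξ2 : ξ ^ (q ^ 2) = ξ)
    (hy : y ^ q + y = u) (hz : z ^ q + z = v)
    (huv : u ^ 2 + ε * v ^ 2 + u * v + 1 = 0)
    (hs : s = y + ξ * z) (ht : t = y + (ξ + 1) * z) :
    (s ^ q + t) * (t ^ q + s) = 1 := by
  have h2 : (2 : K) = 0 := by exact_mod_cast CharP.cast_eq_zero K 2
  have hξsq : ξ ^ 2 = ξ + ε := by linear_combination hξ - (ξ + ε) * h2
  have key : ∀ i, ξ ^ (2 ^ i) = ξ + ∑ j ∈ Finset.range i, ε ^ (2 ^ j) := by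
    intro i
    induction i with
    | zero => simp
    | succ i ih =>
      have e1 : ξ ^ (2 ^ (i + 1)) = (ξ ^ (2 ^ i)) ^ 2 := by
        rw [← pow_mul, pow_succ]
      rw [e1, ih, add_pow_char _ _ 2, hξsq, sum_pow_char,
        Finset.sum_range_succ']
      have e2 : ∀ j, (ε ^ (2 ^ j)) ^ 2 = ε ^ (2 ^ (j + 1)) := by
        intro j; rw [← pow_mul, pow_succ]
      simp only [e2, pow_zero, pow_one]
      ring
  have hξq : ξ ^ q = ξ + 1 := by rw [hq, key n, htr]
  have hfrob : ∀ a b : K, (a + b) ^ q = a ^ q + b ^ q := by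
    subst hq; intro a b; exact add_pow_char_pow a b 2 n
  have hsq : s ^ q + t = u + (ξ + 1) * v := by
    rw [hs, ht, hfrob, mul_pow, hξq]
    linear_combination hy + (ξ + 1) * hz
  have htq : t ^ q + s = u + ξ * v := by
    rw [ht, hs, hfrob, mul_pow, hfrob, hξq, one_pow]
    linear_combination hy + ξ * hz + z ^ q * h2
  rw [hsq, htq]
  linear_combination huv + v ^ 2 * hξ + (ξ * u * v - ε * v ^ 2 - 1) * h2
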